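/- Let V : ℝ^d → ℝ be continuous and bounded above, and let E ∈ ℝ. Let 𝒢 ⊂ ℝ^d be a closed set and define d_𝒢(x) = inf_{y ∈ 𝒢} d_E(x,y). Then at every point x ∈ ℝ^d at which d_𝒢 is differentiable, the gradient satisfies ∂d_𝒢(x) ∈ K_x, where K_x = {ξ ∈ ℝ^d : Σ_{j=1}^d sinh²(ξ_j/2) ≤ (V(x)−E)₊/4}. In particular, since d_𝒢 is Lipschitz, ∂d_𝒢(x) ∈ K_x for almost every x ∈ ℝ^d. -/

import Mathlib

open MeasureTheory Real Set Pointwise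
open scoped RealInnerProductSpace

noncomputable section

/-- The convex body `K_x = {ξ : Σ_j sinh²(ξ_j/2) ≤ (V(x)−E)₊/4}` of the
Agmon–Finsler metric at energy `E`. -/
def Kx {d : ℕ} (V : EuclideanSpace ℝ (Fin d) → ℝ) (E : ℝ)
    (x : EuclideanSpace ℝ (Fin d)) : Set (EuclideanSpace ℝ (Fin d)) :=
  {ξ | ∑ j, Real.sinh (ξ j / 2) ^ 2 ≤ max (V x - E) 0 / 4}

/-- The Agmon–Finsler metric `L(x,v) = sup_{ξ ∈ K_x} ⟨ξ, v⟩`. -/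
def Lmet {d : ℕ} (V : EuclideanSpace ℝ (Fin d) → ℝ) (E : ℝ)
    (x v : EuclideanSpace ℝ (Fin d)) : ℝ :=
  sSup {r | ∃ ξ ∈ Kx V E x, r = (inner ℝ ξ v : ℝ)}

/-- The Agmon–Finsler pseudo-distance `d_E(x,y)`, the infimum of the lengths
`∫₀¹ L(γ(t), γ'(t)) dt` over C¹ curves from `x` to `y`. -/
def agmonDist {d : ℕ} (V : EuclideanSpace ℝ (Fin d) → ℝ) (E : ℝ)
    (x y : EuclideanSpace ℝ (Fin d)) : ℝ :=
  sInf {r | ∃ γ : ℝ → EuclideanSpace ℝ (Fin d), ContDiff ℝ 1 γ ∧ γ 0 = x ∧ γ 1 = y ∧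
    r = ∫ t in (0:ℝ)..1, Lmet V E (γ t) (deriv γ t)}

/-- The Agmon–Finsler distance `d_𝒢(x) = inf_{y ∈ 𝒢} d_E(x,y)` to a set `𝒢`. -/
def distToSet {d : ℕ} (V : EuclideanSpace ℝ (Fin d) → ℝ) (E : ℝ)
    (G : Set (EuclideanSpace ℝ (Fin d))) (x : EuclideanSpace ℝ (Fin d)) : ℝ :=
  sInf {r | ∃ y ∈ G, r = agmonDist V E x y}

abbrev Euc (d : ℕ) := EuclideanSpace ℝ (Fin d)

def Kc (d : ℕ) (c : ℝ) : Set (Euc d) := {ξ | ∑ j, Real.sinh (ξ j / 2) ^ 2 ≤ c}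

def Lc (d : ℕ) (c : ℝ) (v : Euc d) : ℝ := sSup {r | ∃ ξ ∈ Kc d c, r = ⟪ξ, v⟫}

variable {d : ℕ}

lemma zero_mem_Kc {c : ℝ} (hc : 0 ≤ c) : (0 : Euc d) ∈ Kc d c := by
  simp [Kc, hc]

lemma norm_le_of_mem_Kc {c : ℝ} {ξ : Euc d} (hξ : ξ ∈ Kc d c) :
    ‖ξ‖ ≤ 2 * Real.sqrt c := by
  have key : ∀ j, ‖ξ j‖ ^ 2 ≤ 4 * Real.sinh (ξ j / 2) ^ 2 := by
    intro j
    have h1 : |ξ j / 2| ≤ |Real.sinh (ξ j / 2)| := by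
      rw [Real.abs_sinh]
      exact Real.self_le_sinh_iff.2 (abs_nonneg _)
    have h2 : (ξ j / 2) ^ 2 ≤ Real.sinh (ξ j / 2) ^ 2 := by
      rw [← sq_abs (ξ j / 2), ← sq_abs (Real.sinh _)]
      exact pow_le_pow_left₀ (abs_nonneg _) h1 2
    rw [Real.norm_eq_abs, sq_abs]
    nlinarith
  have hsum : ∑ j, ‖ξ j‖ ^ 2 ≤ 4 * c := by
    calc ∑ j, ‖ξ j‖ ^ 2 ≤ ∑ j, 4 * Real.sinh (ξ j / 2) ^ 2 :=
          Finset.sum_le_sum fun j _ => key j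
      _ = 4 * ∑ j, Real.sinh (ξ j / 2) ^ 2 := by rw [Finset.mul_sum]
      _ ≤ 4 * c := by
          have hξ' : ∑ j, Real.sinh (ξ j / 2) ^ 2 ≤ c := hξ
          linarith
  have hc : 0 ≤ c := by
    have : (0:ℝ) ≤ ∑ j, ‖ξ j‖ ^ 2 := Finset.sum_nonneg fun j _ => sq_nonneg _
    linarith
  rw [EuclideanSpace.norm_eq]
  calc Real.sqrt (∑ j, ‖ξ j‖ ^ 2) ≤ Real.sqrt (4 * c) := Real.sqrt_le_sqrt hsum
    _ = 2 * Real.sqrt c := by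
      rw [show (4:ℝ) * c = 2^2 * c by ring, Real.sqrt_mul (by positivity), Real.sqrt_sq (by norm_num)]

lemma sinh_convex : ConvexOn ℝ (Ici (0:ℝ)) Real.sinh := by
  apply convexOn_of_deriv2_nonneg (convex_Ici 0) Real.continuous_sinh.continuousOn
    Real.differentiable_sinh.differentiableOn
  · rw [Real.deriv_sinh]; exact Real.differentiable_cosh.differentiableOn
  · intro x hx
    rw [interior_Ici, mem_Ioi] at hx
    have : deriv^[2] Real.sinh = Real.sinh := by
      rw [show deriv^[2] Real.sinh = deriv (deriv Real.sinh) from Function.iterate_succ_apply' deriv 1 Real.sinh ▸ rfl]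
      rw [Real.deriv_sinh, Real.deriv_cosh]
    rw [this]
    exact Real.sinh_nonneg_iff.2 hx.le

lemma sinh_smul_le {s t : ℝ} (hs : 0 ≤ s) (hs1 : s ≤ 1) (ht : 0 ≤ t) :
    Real.sinh (s * t) ≤ s * Real.sinh t := by
  have h := sinh_convex.2 (mem_Ici.2 ht) (mem_Ici.2 (le_refl (0:ℝ))) hs
    (show (0:ℝ) ≤ 1 - s by linarith) (show s + (1 - s) = 1 by ring)
  simpa [Real.sinh_zero] using h

lemma sinh_sq_smul_le {s t : ℝ} (hs : 0 ≤ s) (hs1 : s ≤ 1) :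
    Real.sinh (s * t) ^ 2 ≤ s ^ 2 * Real.sinh t ^ 2 := by
  have key : |Real.sinh (s * t)| ≤ s * |Real.sinh t| := by
    rw [Real.abs_sinh, Real.abs_sinh, abs_mul, abs_of_nonneg hs]
    exact sinh_smul_le hs hs1 (abs_nonneg t)
  calc Real.sinh (s * t) ^ 2 = |Real.sinh (s * t)| ^ 2 := (sq_abs _).symm
    _ ≤ (s * |Real.sinh t|) ^ 2 := pow_le_pow_left₀ (abs_nonneg _) key 2
    _ = s ^ 2 * Real.sinh t ^ 2 := by rw [mul_pow, sq_abs]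

lemma smul_mem_Kc {c s : ℝ} {ξ : Euc d} (hs : 0 ≤ s) (hs1 : s ≤ 1) (hξ : ξ ∈ Kc d c) :
    s • ξ ∈ Kc d (s ^ 2 * c) := by
  have hξ' : ∑ j, Real.sinh (ξ j / 2) ^ 2 ≤ c := hξ
  show ∑ j, Real.sinh ((s • ξ) j / 2) ^ 2 ≤ s ^ 2 * c
  have : ∀ j, Real.sinh ((s • ξ) j / 2) ^ 2 ≤ s ^ 2 * Real.sinh (ξ j / 2) ^ 2 := by
    intro j
    have : (s • ξ) j / 2 = s * (ξ j / 2) := by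
      simp [PiLp.smul_apply, smul_eq_mul]; ring
    rw [this]
    exact sinh_sq_smul_le hs hs1
  calc ∑ j, Real.sinh ((s • ξ) j / 2) ^ 2 ≤ ∑ j, s ^ 2 * Real.sinh (ξ j / 2) ^ 2 :=
        Finset.sum_le_sum fun j _ => this j
    _ = s ^ 2 * ∑ j, Real.sinh (ξ j / 2) ^ 2 := by rw [Finset.mul_sum]
    _ ≤ s ^ 2 * c := by nlinarith [sq_nonneg s]

lemma cosh_convex : ConvexOn ℝ (univ : Set ℝ) Real.cosh := by
  apply convexOn_univ_of_deriv2_nonneg Real.differentiable_cosh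
  · rw [Real.deriv_cosh]; exact Real.differentiable_sinh
  · intro x
    have : deriv^[2] Real.cosh = Real.cosh := by
      rw [show deriv^[2] Real.cosh = deriv (deriv Real.cosh) from Function.iterate_succ_apply' deriv 1 Real.cosh ▸ rfl]
      rw [Real.deriv_cosh, Real.deriv_sinh]
    rw [this]
    exact (Real.cosh_pos (x := x)).le

lemma sinh_half_sq_eq (t : ℝ) : Real.sinh (t / 2) ^ 2 = (Real.cosh t - 1) / 2 := by
  have h1 : Real.cosh (2 * (t / 2)) = Real.cosh (t / 2) ^ 2 + Real.sinh (t / 2) ^ 2 :=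
    Real.cosh_two_mul _
  have h2 : Real.cosh (t / 2) ^ 2 = Real.sinh (t / 2) ^ 2 + 1 := Real.cosh_sq _
  have h3 : (2 : ℝ) * (t / 2) = t := by ring
  rw [h3] at h1
  linarith

lemma Kc_convex {c : ℝ} : Convex ℝ (Kc d c) := by
  intro ξ hξ ζ hζ a b ha hb hab
  have hξ' : ∑ j, Real.sinh (ξ j / 2) ^ 2 ≤ c := hξ
  have hζ' : ∑ j, Real.sinh (ζ j / 2) ^ 2 ≤ c := hζ
  show ∑ j, Real.sinh ((a • ξ + b • ζ) j / 2) ^ 2 ≤ c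
  have key : ∀ j, Real.sinh ((a • ξ + b • ζ) j / 2) ^ 2
      ≤ a * Real.sinh (ξ j / 2) ^ 2 + b * Real.sinh (ζ j / 2) ^ 2 := by
    intro j
    have hj : (a • ξ + b • ζ) j = a * ξ j + b * ζ j := by
      simp [PiLp.add_apply, PiLp.smul_apply, smul_eq_mul]
    rw [hj, sinh_half_sq_eq, sinh_half_sq_eq, sinh_half_sq_eq]
    have := cosh_convex.2 (mem_univ (ξ j)) (mem_univ (ζ j)) ha hb hab
    simp only [smul_eq_mul] at this
    linarith
  calc ∑ j, Real.sinh ((a • ξ + b • ζ) j / 2) ^ 2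
      ≤ ∑ j, (a * Real.sinh (ξ j / 2) ^ 2 + b * Real.sinh (ζ j / 2) ^ 2) :=
        Finset.sum_le_sum fun j _ => key j
    _ = a * ∑ j, Real.sinh (ξ j / 2) ^ 2 + b * ∑ j, Real.sinh (ζ j / 2) ^ 2 := by
        rw [Finset.sum_add_distrib, Finset.mul_sum, Finset.mul_sum]
    _ ≤ a * c + b * c := by
        have := mul_le_mul_of_nonneg_left hξ' ha
        have := mul_le_mul_of_nonneg_left hζ' hb
        linarith
    _ = c := by rw [← add_mul, hab, one_mul]

lemma Kc_closed {c : ℝ} : IsClosed (Kc d c) := by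
  have hcont : Continuous fun ξ : Euc d => ∑ j, Real.sinh (ξ j / 2) ^ 2 := by
    apply continuous_finset_sum
    intro j _
    exact (Real.continuous_sinh.comp ((PiLp.continuous_apply (p := 2) (β := fun _ : Fin d => ℝ) j).div_const 2)).pow 2
  exact isClosed_le hcont continuous_const

lemma neg_mem_Kc {c : ℝ} {ξ : Euc d} (hξ : ξ ∈ Kc d c) : -ξ ∈ Kc d c := by
  have hξ' : ∑ j, Real.sinh (ξ j / 2) ^ 2 ≤ c := hξ
  show ∑ j, Real.sinh ((-ξ) j / 2) ^ 2 ≤ c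
  have : ∀ j, Real.sinh ((-ξ) j / 2) ^ 2 = Real.sinh (ξ j / 2) ^ 2 := by
    intro j
    have : (-ξ) j = -(ξ j) := rfl
    rw [this, neg_div, Real.sinh_neg, neg_sq]
  simp only [this]; exact hξ'

def LcSet (d : ℕ) (c : ℝ) (v : Euc d) : Set ℝ := {r | ∃ ξ ∈ Kc d c, r = ⟪ξ, v⟫}

lemma Lc_eq_sSup (c : ℝ) (v : Euc d) : Lc d c v = sSup (LcSet d c v) := rfl

lemma zero_mem_LcSet {c : ℝ} (hc : 0 ≤ c) (v : Euc d) : (0:ℝ) ∈ LcSet d c v :=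
  ⟨0, zero_mem_Kc hc, by simp⟩

lemma LcSet_nonempty {c : ℝ} (hc : 0 ≤ c) (v : Euc d) : (LcSet d c v).Nonempty :=
  ⟨0, zero_mem_LcSet hc v⟩

lemma mem_LcSet_le {c : ℝ} {v : Euc d} {r : ℝ} (hr : r ∈ LcSet d c v) :
    r ≤ 2 * Real.sqrt c * ‖v‖ := by
  obtain ⟨ξ, hξ, rfl⟩ := hr
  calc ⟪ξ, v⟫ ≤ ‖ξ‖ * ‖v‖ := real_inner_le_norm ξ v
    _ ≤ 2 * Real.sqrt c * ‖v‖ :=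
      mul_le_mul_of_nonneg_right (norm_le_of_mem_Kc hξ) (norm_nonneg v)

lemma LcSet_bddAbove (c : ℝ) (v : Euc d) : BddAbove (LcSet d c v) :=
  ⟨2 * Real.sqrt c * ‖v‖, fun _ hr => mem_LcSet_le hr⟩

lemma Lc_nonneg {c : ℝ} (hc : 0 ≤ c) (v : Euc d) : 0 ≤ Lc d c v :=
  le_csSup (LcSet_bddAbove c v) (zero_mem_LcSet hc v)

lemma Lc_le (c : ℝ) (v : Euc d) : Lc d c v ≤ 2 * Real.sqrt c * ‖v‖ :=
  Real.sSup_le (fun _ hr => mem_LcSet_le hr) (by positivity)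

lemma inner_le_Lc {c : ℝ} {ξ v : Euc d} (hξ : ξ ∈ Kc d c) : ⟪ξ, v⟫ ≤ Lc d c v :=
  le_csSup (LcSet_bddAbove c v) ⟨ξ, hξ, rfl⟩

lemma Lc_mono {c c' : ℝ} (hc : 0 ≤ c) (h : c ≤ c') (v : Euc d) : Lc d c v ≤ Lc d c' v := by
  apply csSup_le_csSup (LcSet_bddAbove c' v) (LcSet_nonempty hc v)
  rintro r ⟨ξ, hξ, rfl⟩
  exact ⟨ξ, le_trans (show ∑ j, Real.sinh (ξ j / 2) ^ 2 ≤ c from hξ) h, rfl⟩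

lemma Lc_smul {c s : ℝ} (hs : 0 ≤ s) (hc : 0 ≤ c) (v : Euc d) :
    Lc d c (s • v) = s * Lc d c v := by
  have hset : LcSet d c (s • v) = s • LcSet d c v := by
    ext r
    constructor
    · rintro ⟨ξ, hξ, rfl⟩
      exact ⟨⟪ξ, v⟫, ⟨ξ, hξ, rfl⟩, by
        show s • (⟪ξ, v⟫ : ℝ) = ⟪ξ, s • v⟫
        rw [smul_eq_mul, real_inner_smul_right]⟩
    · rintro ⟨r', ⟨ξ, hξ, rfl⟩, rfl⟩
      exact ⟨ξ, hξ, by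
        show s • (⟪ξ, v⟫ : ℝ) = ⟪ξ, s • v⟫
        rw [smul_eq_mul, real_inner_smul_right]⟩
  rw [Lc_eq_sSup, hset, Real.sSup_smul_of_nonneg hs, smul_eq_mul, Lc_eq_sSup]

lemma Lc_neg (c : ℝ) (v : Euc d) : Lc d c (-v) = Lc d c v := by
  have hset : ∀ (w : Euc d), LcSet d c (-w) ⊆ LcSet d c w := by
    rintro w r ⟨ξ, hξ, rfl⟩
    exact ⟨-ξ, neg_mem_Kc hξ, by rw [inner_neg_left, inner_neg_right]⟩
  rw [Lc_eq_sSup, Lc_eq_sSup]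
  apply le_antisymm
  · rcases le_or_gt c 0 with h | h
    · rcases lt_or_eq_of_le h with h' | h'
      · have h1 : LcSet d c (-v) = ∅ := by
          rw [eq_empty_iff_forall_notMem]
          rintro r ⟨ξ, hξ, rfl⟩
          have hξ'' : ∑ j, Real.sinh (ξ j / 2) ^ 2 ≤ c := hξ
          have := le_trans (Finset.sum_nonneg (s := Finset.univ)
            (f := fun j => Real.sinh (ξ j / 2) ^ 2) fun j _ => sq_nonneg _) hξ''
          linarith
        have h2 : LcSet d c v = ∅ := by
          rw [eq_empty_iff_forall_notMem]
          rintro r ⟨ξ, hξ, rfl⟩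
          have hξ'' : ∑ j, Real.sinh (ξ j / 2) ^ 2 ≤ c := hξ
          have := le_trans (Finset.sum_nonneg (s := Finset.univ)
            (f := fun j => Real.sinh (ξ j / 2) ^ 2) fun j _ => sq_nonneg _) hξ''
          linarith
        rw [h1, h2]
      · exact csSup_le_csSup (LcSet_bddAbove c v) (LcSet_nonempty h'.ge (-v)) (hset v)
    · exact csSup_le_csSup (LcSet_bddAbove c v) (LcSet_nonempty h.le (-v)) (hset v)
  · rcases le_or_gt c 0 with h | h
    · rcases lt_or_eq_of_le h with h' | h'
      · have h1 : LcSet d c (-v) = ∅ := by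
          rw [eq_empty_iff_forall_notMem]
          rintro r ⟨ξ, hξ, rfl⟩
          have hξ'' : ∑ j, Real.sinh (ξ j / 2) ^ 2 ≤ c := hξ
          have := le_trans (Finset.sum_nonneg (s := Finset.univ)
            (f := fun j => Real.sinh (ξ j / 2) ^ 2) fun j _ => sq_nonneg _) hξ''
          linarith
        have h2 : LcSet d c v = ∅ := by
          rw [eq_empty_iff_forall_notMem]
          rintro r ⟨ξ, hξ, rfl⟩
          have hξ'' : ∑ j, Real.sinh (ξ j / 2) ^ 2 ≤ c := hξ
          have := le_trans (Finset.sum_nonneg (s := Finset.univ)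
            (f := fun j => Real.sinh (ξ j / 2) ^ 2) fun j _ => sq_nonneg _) hξ''
          linarith
        rw [h1, h2]
      · refine csSup_le_csSup (LcSet_bddAbove c (-v)) (LcSet_nonempty h'.ge v) ?_
        have := hset (-v); rwa [neg_neg] at this
    · refine csSup_le_csSup (LcSet_bddAbove c (-v)) (LcSet_nonempty h.le v) ?_
      have := hset (-v); rwa [neg_neg] at this

lemma Lc_scale_le {c c' : ℝ} (hc : 0 < c) (h : c ≤ c') (v : Euc d) :
    Lc d c' v ≤ Real.sqrt (c' / c) * Lc d c v := by
  have hc' : 0 < c' := lt_of_lt_of_le hc h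
  set s : ℝ := Real.sqrt (c / c') with hs_def
  have hs_pos : 0 < s := Real.sqrt_pos.2 (by positivity)
  have hs1 : s ≤ 1 := by
    rw [hs_def, show (1:ℝ) = Real.sqrt 1 by rw [Real.sqrt_one]]
    exact Real.sqrt_le_sqrt (by rw [div_le_one hc']; exact h)
  apply Real.sSup_le
  · rintro r ⟨ξ, hξ, rfl⟩
    have hmem : s • ξ ∈ Kc d c := by
      have := smul_mem_Kc hs_pos.le hs1 hξ
      rwa [Real.sq_sqrt (by positivity), div_mul_cancel₀ _ hc'.ne'] at this
    have h1 : ⟪s • ξ, v⟫ ≤ Lc d c v := inner_le_Lc hmem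
    rw [real_inner_smul_left] at h1
    have h2 : ⟪ξ, v⟫ ≤ s⁻¹ * Lc d c v := by
      rw [← mul_le_mul_iff_right₀ hs_pos, ← mul_assoc, mul_inv_cancel₀ hs_pos.ne', one_mul]
      exact h1
    have h3 : s⁻¹ = Real.sqrt (c' / c) := by
      rw [hs_def, ← Real.sqrt_inv, inv_div]
    rwa [h3] at h2
  · have := Lc_nonneg hc.le v
    positivity

lemma Lc_lipschitz_v {c : ℝ} (hc : 0 ≤ c) (v w : Euc d) :
    Lc d c v - Lc d c w ≤ 2 * Real.sqrt c * ‖v - w‖ := by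
  rw [sub_le_iff_le_add]
  apply Real.sSup_le
  · rintro r ⟨ξ, hξ, rfl⟩
    have h1 : ⟪ξ, v⟫ = ⟪ξ, w⟫ + ⟪ξ, v - w⟫ := by
      rw [← inner_add_right]
      have : w + (v - w) = v := by abel
      rw [this]
    have h2 : ⟪ξ, v - w⟫ ≤ 2 * Real.sqrt c * ‖v - w‖ :=
      le_trans (real_inner_le_norm _ _)
        (mul_le_mul_of_nonneg_right (norm_le_of_mem_Kc hξ) (norm_nonneg _))
    have h3 : ⟪ξ, w⟫ ≤ Lc d c w := inner_le_Lc hξ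
    linarith
  · have := Lc_nonneg hc w
    positivity

lemma Lc_zero (v : Euc d) : Lc d 0 v = 0 := by
  have h1 := Lc_le (d := d) 0 v
  have h2 := Lc_nonneg (d := d) le_rfl v
  simp only [Real.sqrt_zero, mul_zero, zero_mul] at h1
  linarith

lemma Lc_cont_c (w₀ : Euc d) {c₀ : ℝ} (hc₀ : 0 ≤ c₀) {ε : ℝ} (hε : 0 < ε) :
    ∃ δ > 0, ∀ c, 0 ≤ c → |c - c₀| < δ → |Lc d c w₀ - Lc d c₀ w₀| < ε := by
  rcases eq_or_lt_of_le hc₀ with h0 | h0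
  · -- c₀ = 0
    refine ⟨(ε / (2 * (‖w₀‖ + 1))) ^ 2, by positivity, fun c hc hcd => ?_⟩
    rw [← h0, Lc_zero, sub_zero, abs_of_nonneg (Lc_nonneg hc w₀)]
    have hsq : Real.sqrt c < ε / (2 * (‖w₀‖ + 1)) := by
      rw [Real.sqrt_lt' (by positivity)]
      calc c = |c - c₀| := by rw [← h0, sub_zero, abs_of_nonneg hc]
        _ < _ := hcd
    calc Lc d c w₀ ≤ 2 * Real.sqrt c * ‖w₀‖ := Lc_le c w₀
      _ ≤ 2 * Real.sqrt c * (‖w₀‖ + 1) := by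
          have h2 : (0:ℝ) ≤ 2 * Real.sqrt c := by positivity
          nlinarith
      _ < 2 * (ε / (2 * (‖w₀‖ + 1))) * (‖w₀‖ + 1) := by
          have hp : (0:ℝ) < ‖w₀‖ + 1 := by positivity
          nlinarith
      _ = ε := by field_simp
  · -- c₀ > 0
    set L₀ := Lc d c₀ w₀ with hL₀
    have hL₀nn : 0 ≤ L₀ := Lc_nonneg hc₀ w₀
    set B : ℝ → ℝ := fun c => (|Real.sqrt (c / c₀) - 1| + |Real.sqrt (c₀ / c) - 1|) * L₀
      with hB
    have hBc₀ : B c₀ = 0 := by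
      simp [hB, div_self h0.ne']
    have hBcont : ContinuousAt B c₀ := by
      apply ContinuousAt.mul _ continuousAt_const
      apply ContinuousAt.add
      · exact ((Real.continuous_sqrt.continuousAt).comp
          ((continuousAt_id.div continuousAt_const h0.ne'))).sub continuousAt_const |>.abs
      · exact ((Real.continuous_sqrt.continuousAt).comp
          ((continuousAt_const.div continuousAt_id h0.ne'))).sub continuousAt_const |>.abs
    rw [Metric.continuousAt_iff] at hBcont
    obtain ⟨δ₁, hδ₁, hδ₁p⟩ := hBcont ε hε
    refine ⟨min δ₁ (c₀ / 2), by positivity, fun c hc hcd => ?_⟩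
    have hcpos : 0 < c := by
      have := abs_lt.1 (lt_of_lt_of_le hcd (min_le_right _ _))
      linarith [this.1]
    have hkey : |Lc d c w₀ - L₀| ≤ B c := by
      rcases le_total c c₀ with hle | hle
      · have hmono : Lc d c w₀ ≤ L₀ := Lc_mono hc hle w₀
        have hscale : L₀ ≤ Real.sqrt (c₀ / c) * Lc d c w₀ := Lc_scale_le hcpos hle w₀
        have hfac : 1 ≤ Real.sqrt (c₀ / c) := by
          rw [show (1:ℝ) = Real.sqrt 1 by rw [Real.sqrt_one]]
          exact Real.sqrt_le_sqrt ((one_le_div hcpos).2 hle)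
        rw [abs_of_nonpos (by linarith)]
        have h1 : L₀ - Lc d c w₀ ≤ (Real.sqrt (c₀ / c) - 1) * Lc d c w₀ := by nlinarith
        have h2 : (Real.sqrt (c₀ / c) - 1) * Lc d c w₀ ≤ (Real.sqrt (c₀ / c) - 1) * L₀ := by
          nlinarith
        rw [hB]
        have h3 : (Real.sqrt (c₀ / c) - 1) ≤ |Real.sqrt (c / c₀) - 1| + |Real.sqrt (c₀ / c) - 1| := by
          have := le_abs_self (Real.sqrt (c₀ / c) - 1)
          have := abs_nonneg (Real.sqrt (c / c₀) - 1)
          linarith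
        nlinarith
      · have hmono : L₀ ≤ Lc d c w₀ := Lc_mono hc₀ hle w₀
        have hscale : Lc d c w₀ ≤ Real.sqrt (c / c₀) * L₀ := Lc_scale_le h0 hle w₀
        rw [abs_of_nonneg (by linarith)]
        have hfac : 1 ≤ Real.sqrt (c / c₀) := by
          rw [show (1:ℝ) = Real.sqrt 1 by rw [Real.sqrt_one]]
          exact Real.sqrt_le_sqrt ((one_le_div h0).2 hle)
        rw [hB]
        have h3 : (Real.sqrt (c / c₀) - 1) ≤ |Real.sqrt (c / c₀) - 1| + |Real.sqrt (c₀ / c) - 1| := by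
          have := le_abs_self (Real.sqrt (c / c₀) - 1)
          have := abs_nonneg (Real.sqrt (c₀ / c) - 1)
          linarith
        nlinarith
    have hBlt : B c < ε := by
      have := hδ₁p (show dist c c₀ < δ₁ from lt_of_lt_of_le (by rwa [Real.dist_eq]) (min_le_left _ _))
      rw [Real.dist_eq, hBc₀, sub_zero] at this
      calc B c ≤ |B c| := le_abs_self _
        _ < ε := this
    linarith [hkey, hBlt]

lemma continuous_Lc_comp {α : Type*} [PseudoMetricSpace α] {C : α → ℝ} {W : α → Euc d}
    (hC : Continuous C) (hW : Continuous W) (h0 : ∀ t, 0 ≤ C t) :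
    Continuous fun t => Lc d (C t) (W t) := by
  rw [continuous_iff_continuousAt]
  intro t₀
  rw [Metric.continuousAt_iff]
  intro ε hε
  set c₀ := C t₀ with hc₀def
  set w₀ := W t₀ with hw₀def
  set R : ℝ := 2 * Real.sqrt (c₀ + 1) + 1 with hRdef
  have hR : 0 < R := by positivity
  obtain ⟨δc, hδc, hδcp⟩ := Lc_cont_c w₀ (h0 t₀) (half_pos hε)
  have hCc : ContinuousAt C t₀ := hC.continuousAt
  rw [Metric.continuousAt_iff] at hCc
  obtain ⟨δ₁, hδ₁, hδ₁p⟩ := hCc (min δc 1) (lt_min hδc one_pos)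
  have hWc : ContinuousAt W t₀ := hW.continuousAt
  rw [Metric.continuousAt_iff] at hWc
  obtain ⟨δ₂, hδ₂, hδ₂p⟩ := hWc (ε / (2 * R)) (by positivity)
  refine ⟨min δ₁ δ₂, lt_min hδ₁ hδ₂, fun {t} ht => ?_⟩
  have ht₁ := hδ₁p (lt_of_lt_of_le ht (min_le_left _ _))
  have ht₂ := hδ₂p (lt_of_lt_of_le ht (min_le_right _ _))
  rw [Real.dist_eq] at ht₁ ⊢
  rw [dist_eq_norm] at ht₂
  have hCt1 : |C t - c₀| < δc := lt_of_lt_of_le ht₁ (min_le_left _ _)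
  have hCt2 : C t < c₀ + 1 := by
    have := (abs_lt.1 (lt_of_lt_of_le ht₁ (min_le_right _ _))).2
    linarith
  have hsplit : |Lc d (C t) (W t) - Lc d c₀ w₀|
      ≤ |Lc d (C t) (W t) - Lc d (C t) w₀| + |Lc d (C t) w₀ - Lc d c₀ w₀| := by
    have := abs_sub_abs_le_abs_sub (Lc d (C t) (W t)) (Lc d c₀ w₀)
    calc |Lc d (C t) (W t) - Lc d c₀ w₀|
        = |(Lc d (C t) (W t) - Lc d (C t) w₀) + (Lc d (C t) w₀ - Lc d c₀ w₀)| := by ring_nf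
      _ ≤ _ := abs_add_le _ _
  have hfirst : |Lc d (C t) (W t) - Lc d (C t) w₀| ≤ 2 * Real.sqrt (C t) * ‖W t - w₀‖ := by
    rw [abs_le]
    constructor
    · have h := Lc_lipschitz_v (h0 t) w₀ (W t)
      rw [show w₀ - W t = -(W t - w₀) by abel, norm_neg] at h
      linarith
    · exact Lc_lipschitz_v (h0 t) (W t) w₀
  have hsqrt : Real.sqrt (C t) ≤ Real.sqrt (c₀ + 1) := Real.sqrt_le_sqrt hCt2.le
  have hfirst2 : |Lc d (C t) (W t) - Lc d (C t) w₀| < ε / 2 := by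
    calc |Lc d (C t) (W t) - Lc d (C t) w₀| ≤ 2 * Real.sqrt (C t) * ‖W t - w₀‖ := hfirst
      _ ≤ R * ‖W t - w₀‖ := by
          have hn : (0:ℝ) ≤ ‖W t - w₀‖ := norm_nonneg _
          have : 2 * Real.sqrt (C t) ≤ R := by
            rw [hRdef]; linarith
          nlinarith
      _ < R * (ε / (2 * R)) := by
          apply mul_lt_mul_of_pos_left _ hR
          exact ht₂
      _ = ε / 2 := by field_simp
  have hsecond : |Lc d (C t) w₀ - Lc d c₀ w₀| < ε / 2 := hδcp (C t) (h0 t) hCt1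
  linarith

lemma expNegInvGlue_monotone : Monotone expNegInvGlue := by
  intro a b hab
  rcases le_or_gt b 0 with hb | hb
  · rw [expNegInvGlue.zero_of_nonpos (hab.trans hb), expNegInvGlue.zero_of_nonpos hb]
  · rcases le_or_gt a 0 with ha | ha
    · rw [expNegInvGlue.zero_of_nonpos ha]; exact expNegInvGlue.nonneg b
    · have h1 : expNegInvGlue a = Real.exp (-a⁻¹) := by
        rw [expNegInvGlue, if_neg (not_le.2 ha)]
      have h2 : expNegInvGlue b = Real.exp (-b⁻¹) := by
        rw [expNegInvGlue, if_neg (not_le.2 hb)]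
      rw [h1, h2]
      apply Real.exp_le_exp.2
      have : b⁻¹ ≤ a⁻¹ := one_div b ▸ one_div a ▸ one_div_le_one_div_of_le ha hab
      linarith

lemma smoothTransition_monotone : Monotone Real.smoothTransition := by
  intro a b hab
  unfold Real.smoothTransition
  rw [div_le_div_iff₀ (Real.smoothTransition.pos_denom a) (Real.smoothTransition.pos_denom b)]
  have h1 : expNegInvGlue a ≤ expNegInvGlue b := expNegInvGlue_monotone hab
  have h2 : expNegInvGlue (1 - b) ≤ expNegInvGlue (1 - a) :=
    expNegInvGlue_monotone (by linarith)
  nlinarith [expNegInvGlue.nonneg a, expNegInvGlue.nonneg b,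
    expNegInvGlue.nonneg (1 - a), expNegInvGlue.nonneg (1 - b)]

lemma monotone_deriv_nonneg {f : ℝ → ℝ} (hm : Monotone f) (x : ℝ) : 0 ≤ deriv f x := by
  rcases em (DifferentiableAt ℝ f x) with hd | hd
  · have h := hd.hasDerivAt
    rw [hasDerivAt_iff_tendsto_slope] at h
    refine ge_of_tendsto h ?_
    filter_upwards [self_mem_nhdsWithin] with y hy
    rcases lt_or_gt_of_ne (Set.mem_compl_singleton_iff.1 hy) with h' | h'
    · rw [slope_def_field]
      have hnum : f y - f x ≤ 0 := by simpa using hm h'.le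
      have hden : y - x < 0 := by linarith
      exact div_nonneg_of_nonpos (by linarith) hden.le
    · rw [slope_def_field]
      apply div_nonneg
      · simpa using hm h'.le
      · linarith
  · rw [deriv_zero_of_not_differentiableAt hd]

lemma smoothTransition_deriv_nonneg (s : ℝ) : 0 ≤ deriv Real.smoothTransition s :=
  monotone_deriv_nonneg smoothTransition_monotone s

lemma smoothTransition_deriv_zero_of_nonpos {s : ℝ} (hs : s ≤ 0) :
    deriv Real.smoothTransition s = 0 := by
  rcases lt_or_eq_of_le hs with hs' | hs'
  · have hev : Real.smoothTransition =ᶠ[nhds s] fun _ => (0:ℝ) := by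
      filter_upwards [Iio_mem_nhds hs'] with t ht
      exact Real.smoothTransition.zero_of_nonpos (le_of_lt ht)
    rw [hev.deriv_eq, deriv_const]
  · subst hs'
    apply IsLocalMin.deriv_eq_zero
    apply Filter.Eventually.of_forall
    intro t
    rw [Real.smoothTransition.zero]
    exact Real.smoothTransition.nonneg t

lemma smoothTransition_deriv_zero_of_one_le {s : ℝ} (hs : 1 ≤ s) :
    deriv Real.smoothTransition s = 0 := by
  rcases lt_or_eq_of_le hs with hs' | hs'
  · have hev : Real.smoothTransition =ᶠ[nhds s] fun _ => (1:ℝ) := by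
      filter_upwards [Ioi_mem_nhds hs'] with t ht
      exact Real.smoothTransition.one_of_one_le (le_of_lt ht)
    rw [hev.deriv_eq, deriv_const]
  · subst hs'
    apply IsLocalMax.deriv_eq_zero
    apply Filter.Eventually.of_forall
    intro t
    rw [Real.smoothTransition.one]
    exact Real.smoothTransition.le_one t

section Curves

variable {V : Euc d → ℝ} {E : ℝ}

def cV (V : Euc d → ℝ) (E : ℝ) (x : Euc d) : ℝ := max (V x - E) 0 / 4

lemma cV_nonneg (x : Euc d) : 0 ≤ cV V E x := by
  unfold cV; positivity

lemma Kx_eq (x : Euc d) : Kx V E x = Kc d (cV V E x) := rfl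

lemma Lmet_eq (x v : Euc d) : Lmet V E x v = Lc d (cV V E x) v := rfl

lemma cV_continuous (hV : Continuous V) : Continuous (cV V E) :=
  (((hV.sub continuous_const).max continuous_const).div_const 4)

lemma Lmet_nonneg (x v : Euc d) : 0 ≤ Lmet V E x v := by
  rw [Lmet_eq]; exact Lc_nonneg (cV_nonneg x) v

lemma Lmet_smul {s : ℝ} (hs : 0 ≤ s) (x v : Euc d) :
    Lmet V E x (s • v) = s * Lmet V E x v := by
  rw [Lmet_eq, Lmet_eq]; exact Lc_smul hs (cV_nonneg x) v

lemma Lmet_neg (x v : Euc d) : Lmet V E x (-v) = Lmet V E x v := by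
  rw [Lmet_eq, Lmet_eq]; exact Lc_neg _ v

variable (V E) in
def CmaxV (hVb : BddAbove (Set.range V)) : ℝ := max (sSup (Set.range V) - E) 0 / 4

lemma cV_le_Cmax (hVb : BddAbove (Set.range V)) (x : Euc d) :
    cV V E x ≤ CmaxV V E hVb := by
  unfold cV CmaxV
  have h1 : V x ≤ sSup (Set.range V) := le_csSup hVb ⟨x, rfl⟩
  have := max_le_max (sub_le_sub_right h1 E) (le_refl (0:ℝ))
  linarith

lemma Cmax_nonneg (hVb : BddAbove (Set.range V)) : 0 ≤ CmaxV V E hVb := by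
  unfold CmaxV; positivity

variable (V E) in
def Rb (hVb : BddAbove (Set.range V)) : ℝ := 2 * Real.sqrt (CmaxV V E hVb)

lemma Rb_nonneg (hVb : BddAbove (Set.range V)) : 0 ≤ Rb V E hVb := by
  unfold Rb; positivity

lemma Lmet_le_Rb (hVb : BddAbove (Set.range V)) (x v : Euc d) :
    Lmet V E x v ≤ Rb V E hVb * ‖v‖ := by
  rw [Lmet_eq]
  calc Lc d (cV V E x) v ≤ 2 * Real.sqrt (cV V E x) * ‖v‖ := Lc_le _ v
    _ ≤ Rb V E hVb * ‖v‖ := by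
        apply mul_le_mul_of_nonneg_right _ (norm_nonneg v)
        unfold Rb
        have := Real.sqrt_le_sqrt (cV_le_Cmax (E := E) hVb x)
        linarith

lemma integrand_continuous (hV : Continuous V) {γ : ℝ → Euc d} (hγ : ContDiff ℝ 1 γ) :
    Continuous fun t => Lmet V E (γ t) (deriv γ t) := by
  have : (fun t => Lmet V E (γ t) (deriv γ t))
      = fun t => Lc d (cV V E (γ t)) (deriv γ t) := rfl
  rw [this]
  exact continuous_Lc_comp ((cV_continuous hV).comp hγ.continuous)
    (hγ.continuous_deriv le_rfl) (fun t => cV_nonneg _)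

lemma Lmet_continuous_x (hV : Continuous V) (h : Euc d) :
    Continuous fun p => Lmet V E p h := by
  have : (fun p => Lmet V E p h) = fun p => Lc d (cV V E p) h := rfl
  rw [this]
  exact continuous_Lc_comp (cV_continuous hV) continuous_const (fun t => cV_nonneg _)

def lineCurve (x y : Euc d) : ℝ → Euc d := fun t => x + t • (y - x)

lemma lineCurve_contDiff (x y : Euc d) : ContDiff ℝ 1 (lineCurve x y) := by
  unfold lineCurve
  exact contDiff_const.add (contDiff_id.smul contDiff_const)

lemma lineCurve_hasDerivAt (x y : Euc d) (t : ℝ) :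
    HasDerivAt (lineCurve x y) (y - x) t := by
  have h : HasDerivAt (fun t : ℝ => t • (y - x)) ((1:ℝ) • (y - x)) t :=
    (hasDerivAt_id t).smul_const (y - x)
  rw [one_smul] at h
  exact h.const_add x

lemma lineCurve_deriv (x y : Euc d) (t : ℝ) : deriv (lineCurve x y) t = y - x :=
  (lineCurve_hasDerivAt x y t).deriv

lemma lineCurve_zero (x y : Euc d) : lineCurve x y 0 = x := by simp [lineCurve]

lemma lineCurve_one (x y : Euc d) : lineCurve x y 1 = y := by
  simp [lineCurve]

def ASet (V : Euc d → ℝ) (E : ℝ) (x y : Euc d) : Set ℝ :=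
  {r | ∃ γ : ℝ → Euc d, ContDiff ℝ 1 γ ∧ γ 0 = x ∧ γ 1 = y ∧
    r = ∫ t in (0:ℝ)..1, Lmet V E (γ t) (deriv γ t)}

lemma agmonDist_eq (x y : Euc d) : agmonDist V E x y = sInf (ASet V E x y) := rfl

lemma ASet_nonempty (x y : Euc d) : (ASet V E x y).Nonempty :=
  ⟨_, lineCurve x y, lineCurve_contDiff x y, lineCurve_zero x y, lineCurve_one x y, rfl⟩

lemma ASet_nonneg {x y : Euc d} {r : ℝ} (hr : r ∈ ASet V E x y) : 0 ≤ r := by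
  obtain ⟨γ, hγ, h0, h1, rfl⟩ := hr
  exact intervalIntegral.integral_nonneg zero_le_one (fun t _ => Lmet_nonneg _ _)

lemma ASet_bddBelow (x y : Euc d) : BddBelow (ASet V E x y) :=
  ⟨0, fun _ hr => ASet_nonneg hr⟩

lemma agmonDist_nonneg (x y : Euc d) : 0 ≤ agmonDist V E x y :=
  le_csInf (ASet_nonempty x y) (fun _ hr => ASet_nonneg hr)

lemma agmonDist_le_of_mem {x y : Euc d} {r : ℝ} (hr : r ∈ ASet V E x y) :
    agmonDist V E x y ≤ r :=
  csInf_le (ASet_bddBelow x y) hr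

lemma agmonDist_le_segment (hV : Continuous V) {x z : Euc d} {M : ℝ}
    (hM : ∀ s ∈ Icc (0:ℝ) 1, Lmet V E (x + s • (z - x)) (z - x) ≤ M) :
    agmonDist V E x z ≤ M := by
  have hline : agmonDist V E x z ≤ ∫ t in (0:ℝ)..1,
      Lmet V E (lineCurve x z t) (deriv (lineCurve x z) t) :=
    agmonDist_le_of_mem ⟨lineCurve x z, lineCurve_contDiff x z,
      lineCurve_zero x z, lineCurve_one x z, rfl⟩
  have hint : (∫ t in (0:ℝ)..1, Lmet V E (lineCurve x z t) (deriv (lineCurve x z) t)) ≤ M := by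
    have hMle : (∫ t in (0:ℝ)..1, Lmet V E (lineCurve x z t) (deriv (lineCurve x z) t))
        ≤ ∫ _ in (0:ℝ)..1, M := by
      apply intervalIntegral.integral_mono_on zero_le_one
      · exact (integrand_continuous hV (lineCurve_contDiff x z)).intervalIntegrable 0 1
      · exact intervalIntegrable_const
      · intro t ht
        rw [lineCurve_deriv]
        exact hM t ht
    simpa using hMle
  linarith

lemma concat_bound (hV : Continuous V) (x z y : Euc d) {M : ℝ}
    (hM : ∀ s ∈ Icc (0:ℝ) 1, Lmet V E (x + s • (z - x)) (z - x) ≤ M)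
    {γ : ℝ → Euc d} (hγ : ContDiff ℝ 1 γ) (hγ0 : γ 0 = z) (hγ1 : γ 1 = y) :
    agmonDist V E x y ≤ M + ∫ t in (0:ℝ)..1, Lmet V E (γ t) (deriv γ t) := by
  set ψ := Real.smoothTransition with hψdef
  set dψ := deriv Real.smoothTransition with hdψdef
  have hψ_contDiff : ContDiff ℝ 1 ψ := Real.smoothTransition.contDiff
  have hψ_diff : Differentiable ℝ ψ := hψ_contDiff.differentiable one_ne_zero
  have hdψ_cont : Continuous dψ := hψ_contDiff.continuous_deriv le_rfl
  have hγ_diff : Differentiable ℝ γ := hγ.differentiable one_ne_zero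
  -- the concatenated curve
  set η : ℝ → Euc d := fun t => x + ψ (2 * t) • (z - x) + (γ (ψ (2 * t - 1)) - z) with hηdef
  have hη_contDiff : ContDiff ℝ 1 η := by
    apply ContDiff.add
    · apply ContDiff.add contDiff_const
      exact (hψ_contDiff.comp (contDiff_const.mul contDiff_id)).smul contDiff_const
    · apply ContDiff.sub _ contDiff_const
      exact hγ.comp (hψ_contDiff.comp
        ((contDiff_const.mul contDiff_id).sub contDiff_const))
  set D : ℝ → Euc d := fun t =>
      (dψ (2 * t) * 2) • (z - x) + (dψ (2 * t - 1) * 2) • deriv γ (ψ (2 * t - 1)) with hDdef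
  have hη_hasDeriv : ∀ t, HasDerivAt η (D t) t := by
    intro t
    have h2t : HasDerivAt (fun t : ℝ => 2 * t) 2 t := by
      simpa using (hasDerivAt_id t).const_mul 2
    have h2t1 : HasDerivAt (fun t : ℝ => 2 * t - 1) 2 t := h2t.sub_const 1
    have hψ2t : HasDerivAt (fun t : ℝ => ψ (2 * t)) (dψ (2 * t) * 2) t :=
      ((hψ_diff (2 * t)).hasDerivAt).comp t h2t
    have hA : HasDerivAt (fun t : ℝ => ψ (2 * t) • (z - x)) ((dψ (2 * t) * 2) • (z - x)) t :=
      hψ2t.smul_const (z - x)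
    have hψ2t1 : HasDerivAt (fun t : ℝ => ψ (2 * t - 1)) (dψ (2 * t - 1) * 2) t :=
      (((hψ_diff (2 * t - 1)).hasDerivAt).comp t h2t1 : HasDerivAt (ψ ∘ fun t : ℝ => 2 * t - 1) _ t)
    have hB : HasDerivAt (fun t : ℝ => γ (ψ (2 * t - 1)))
        ((dψ (2 * t - 1) * 2) • deriv γ (ψ (2 * t - 1))) t := by
      have hg : HasDerivAt γ (deriv γ (ψ (2 * t - 1))) (ψ (2 * t - 1)) :=
        (hγ_diff (ψ (2 * t - 1))).hasDerivAt
      exact HasDerivAt.scomp t hg hψ2t1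
    have := ((hA.const_add x).fun_add (hB.sub_const z))
    simpa [hηdef, hDdef] using this
  have hη_deriv : ∀ t, deriv η t = D t := fun t => (hη_hasDeriv t).deriv
  have hη0 : η 0 = x := by
    have e1 : ψ (0:ℝ) = 0 := Real.smoothTransition.zero
    have e2 : ψ (-1 : ℝ) = 0 := Real.smoothTransition.zero_of_nonpos (by norm_num)
    show x + ψ (2 * 0) • (z - x) + (γ (ψ (2 * 0 - 1)) - z) = x
    norm_num [e1, e2, hγ0]
  have hη1 : η 1 = y := by
    have e1 : ψ (2 * (1:ℝ)) = 1 := Real.smoothTransition.one_of_one_le (by norm_num)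
    have e2 : ψ (2 * (1:ℝ) - 1) = 1 := by
      rw [show (2 * (1:ℝ) - 1) = 1 by norm_num]; exact Real.smoothTransition.one
    show x + ψ (2 * 1) • (z - x) + (γ (ψ (2 * 1 - 1)) - z) = y
    rw [e1, e2, hγ1, one_smul]
    abel
  -- the integrand
  set F : ℝ → ℝ := fun t => Lmet V E (η t) (deriv η t) with hFdef
  have hF_cont : Continuous F := integrand_continuous hV hη_contDiff
  have hsplit : (∫ t in (0:ℝ)..1, F t)
      = (∫ t in (0:ℝ)..(1/2:ℝ), F t) + ∫ t in (1/2:ℝ)..1, F t :=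
    (intervalIntegral.integral_add_adjacent_intervals
      (hF_cont.intervalIntegrable 0 (1/2)) (hF_cont.intervalIntegrable (1/2) 1)).symm
  have hM0 : 0 ≤ M := le_trans (Lmet_nonneg _ _) (hM 0 (by norm_num))
  -- piece 1
  have hpiece1 : (∫ t in (0:ℝ)..(1/2:ℝ), F t) ≤ M := by
    have hbound : ∀ t ∈ Icc (0:ℝ) (1/2:ℝ), F t ≤ (dψ (2 * t) * 2) * M := by
      intro t ht
      have ht1 : 2 * t - 1 ≤ 0 := by
        have := ht.2; linarith
      have hdz : dψ (2 * t - 1) = 0 := smoothTransition_deriv_zero_of_nonpos ht1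
      have hψz : ψ (2 * t - 1) = 0 := Real.smoothTransition.zero_of_nonpos ht1
      have hηt : η t = x + ψ (2 * t) • (z - x) := by
        rw [hηdef]; simp [hψz, hγ0]
      have hDt : deriv η t = (dψ (2 * t) * 2) • (z - x) := by
        rw [hη_deriv, hDdef]; simp [hdz]
      have hd : 0 ≤ dψ (2 * t) * 2 := by
        have := smoothTransition_deriv_nonneg (2 * t); linarith
      rw [hFdef]
      show Lmet V E (η t) (deriv η t) ≤ dψ (2 * t) * 2 * M
      rw [hηt, hDt, Lmet_smul hd]
      have hs : ψ (2 * t) ∈ Icc (0:ℝ) 1 :=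
        ⟨Real.smoothTransition.nonneg _, Real.smoothTransition.le_one _⟩
      have := hM (ψ (2 * t)) hs
      nlinarith
    have hint1 : (∫ t in (0:ℝ)..(1/2:ℝ), F t) ≤ ∫ t in (0:ℝ)..(1/2:ℝ), (dψ (2 * t) * 2) * M := by
      apply intervalIntegral.integral_mono_on (by norm_num)
      · exact hF_cont.intervalIntegrable 0 (1/2)
      · exact (((hdψ_cont.comp (continuous_const.mul continuous_id)).mul
          continuous_const).mul continuous_const).intervalIntegrable 0 (1/2)
      · exact hbound
    have hint2 : (∫ t in (0:ℝ)..(1/2:ℝ), (dψ (2 * t) * 2) * M)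
        = (∫ t in (0:ℝ)..(1/2:ℝ), dψ (2 * t) * 2) * M :=
      intervalIntegral.integral_mul_const M _
    have hint3 : (∫ t in (0:ℝ)..(1/2:ℝ), dψ (2 * t) * 2) = 1 := by
      have hder : ∀ t ∈ uIcc (0:ℝ) (1/2:ℝ), HasDerivAt (fun t : ℝ => ψ (2 * t))
          (dψ (2 * t) * 2) t := by
        intro t _
        exact ((hψ_diff (2 * t)).hasDerivAt).comp t
          (by simpa using (hasDerivAt_id t).const_mul 2)
      have hii : IntervalIntegrable (fun t : ℝ => dψ (2 * t) * 2) volume 0 (1/2) :=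
        ((hdψ_cont.comp (continuous_const.mul continuous_id)).mul
          continuous_const).intervalIntegrable 0 (1/2)
      rw [intervalIntegral.integral_eq_sub_of_hasDerivAt hder hii]
      show ψ (2 * (1/2:ℝ)) - ψ (2 * 0) = 1
      rw [hψdef]
      norm_num [Real.smoothTransition.one, Real.smoothTransition.zero]
    rw [hint2, hint3, one_mul] at hint1
    exact hint1
  -- piece 2
  have hpiece2 : (∫ t in (1/2:ℝ)..1, F t)
      = ∫ t in (0:ℝ)..1, Lmet V E (γ t) (deriv γ t) := by
    set f : ℝ → ℝ := fun s => Lmet V E (γ s) (deriv γ s) with hfdef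
    have hf_cont : Continuous f := integrand_continuous hV hγ
    set φ : ℝ → ℝ := fun t => ψ (2 * t - 1) with hφdef
    set φ' : ℝ → ℝ := fun t => dψ (2 * t - 1) * 2 with hφ'def
    have hφder : ∀ t ∈ uIcc (1/2:ℝ) 1, HasDerivAt φ (φ' t) t := by
      intro t _
      exact ((hψ_diff (2 * t - 1)).hasDerivAt).comp t
        ((by simpa using (hasDerivAt_id t).const_mul 2 : HasDerivAt (fun t : ℝ => 2 * t) 2 t).sub_const 1)
    have hφ'cont : ContinuousOn φ' (uIcc (1/2:ℝ) 1) :=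
      (((hdψ_cont.comp ((continuous_const.mul continuous_id).sub continuous_const)).mul
        continuous_const)).continuousOn
    have hcongr : EqOn F (fun t => φ' t • (f ∘ φ) t) (uIcc (1/2:ℝ) 1) := by
      intro t ht
      rw [uIcc_of_le (by norm_num : (1/2:ℝ) ≤ 1)] at ht
      have h2t : (1:ℝ) ≤ 2 * t := by have := ht.1; linarith
      have hψ1 : ψ (2 * t) = 1 := Real.smoothTransition.one_of_one_le h2t
      have hdz : dψ (2 * t) = 0 := smoothTransition_deriv_zero_of_one_le h2t
      have hηt : η t = γ (ψ (2 * t - 1)) := by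
        show x + ψ (2 * t) • (z - x) + (γ (ψ (2 * t - 1)) - z) = γ (ψ (2 * t - 1))
        rw [hψ1, one_smul]; abel
      have hDt : deriv η t = (dψ (2 * t - 1) * 2) • deriv γ (ψ (2 * t - 1)) := by
        rw [hη_deriv, hDdef]; simp [hdz]
      rw [hFdef]
      show Lmet V E (η t) (deriv η t) = φ' t • (f ∘ φ) t
      rw [hηt, hDt]
      have hd : 0 ≤ dψ (2 * t - 1) * 2 := by
        have := smoothTransition_deriv_nonneg (2 * t - 1); linarith
      rw [Lmet_smul hd]
      rfl
    rw [intervalIntegral.integral_congr hcongr]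
    have := intervalIntegral.integral_comp_smul_deriv hφder hφ'cont hf_cont
    rw [this]
    have hφa : φ (1/2:ℝ) = 0 := by
      show ψ (2 * (1/2:ℝ) - 1) = 0
      rw [show (2 * (1/2:ℝ) - 1) = 0 by norm_num, hψdef]
      exact Real.smoothTransition.zero
    have hφb : φ (1:ℝ) = 1 := by
      show ψ (2 * (1:ℝ) - 1) = 1
      rw [show (2 * (1:ℝ) - 1) = 1 by norm_num, hψdef]
      exact Real.smoothTransition.one
    rw [hφa, hφb]
  have hmem : (∫ t in (0:ℝ)..1, F t) ∈ ASet V E x y :=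
    ⟨η, hη_contDiff, hη0, hη1, rfl⟩
  calc agmonDist V E x y ≤ ∫ t in (0:ℝ)..1, F t := agmonDist_le_of_mem hmem
    _ = (∫ t in (0:ℝ)..(1/2:ℝ), F t) + ∫ t in (1/2:ℝ)..1, F t := hsplit
    _ ≤ M + ∫ t in (0:ℝ)..1, Lmet V E (γ t) (deriv γ t) := by
        rw [hpiece2]; linarith

end Curves

section Main

variable {V : Euc d → ℝ} {E : ℝ} {G : Set (Euc d)}

lemma agmonDist_triangle_seg (hV : Continuous V) {x z : Euc d} {M : ℝ}
    (hM : ∀ s ∈ Icc (0:ℝ) 1, Lmet V E (x + s • (z - x)) (z - x) ≤ M) (y : Euc d) :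
    agmonDist V E x y ≤ M + agmonDist V E z y := by
  have key : ∀ r ∈ ASet V E z y, agmonDist V E x y ≤ M + r := by
    rintro r ⟨γ, hγ, h0, h1, rfl⟩
    exact concat_bound hV x z y hM hγ h0 h1
  have : agmonDist V E x y - M ≤ sInf (ASet V E z y) :=
    le_csInf (ASet_nonempty z y) (fun r hr => by linarith [key r hr])
  rw [agmonDist_eq z y]
  linarith

lemma segment_Rb_bound (hVb : BddAbove (Set.range V)) (x z : Euc d) :
    ∀ s ∈ Icc (0:ℝ) 1, Lmet V E (x + s • (z - x)) (z - x) ≤ Rb V E hVb * ‖z - x‖ :=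
  fun s _ => Lmet_le_Rb hVb _ _

def DSet (V : Euc d → ℝ) (E : ℝ) (G : Set (Euc d)) (x : Euc d) : Set ℝ :=
  {r | ∃ y ∈ G, r = agmonDist V E x y}

lemma distToSet_eq (x : Euc d) : distToSet V E G x = sInf (DSet V E G x) := rfl

lemma DSet_nonempty (hGne : G.Nonempty) (x : Euc d) : (DSet V E G x).Nonempty := by
  obtain ⟨y, hy⟩ := hGne
  exact ⟨agmonDist V E x y, y, hy, rfl⟩

lemma DSet_bddBelow (x : Euc d) : BddBelow (DSet V E G x) := by
  refine ⟨0, ?_⟩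
  rintro r ⟨y, hy, rfl⟩
  exact agmonDist_nonneg x y

lemma distToSet_triangle_seg (hV : Continuous V) (hGne : G.Nonempty) {x z : Euc d} {M : ℝ}
    (hM : ∀ s ∈ Icc (0:ℝ) 1, Lmet V E (x + s • (z - x)) (z - x) ≤ M) :
    distToSet V E G x ≤ M + distToSet V E G z := by
  have key : distToSet V E G x - M ≤ sInf (DSet V E G z) := by
    apply le_csInf (DSet_nonempty hGne z)
    rintro r ⟨y, hy, rfl⟩
    have h1 : distToSet V E G x ≤ agmonDist V E x y :=
      csInf_le (DSet_bddBelow x) ⟨y, hy, rfl⟩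
    have h2 := agmonDist_triangle_seg (E := E) hV hM y
    linarith
  rw [distToSet_eq z]
  linarith

lemma distToSet_lipschitz (hV : Continuous V) (hVb : BddAbove (Set.range V))
    (hGne : G.Nonempty) (x z : Euc d) :
    |distToSet V E G x - distToSet V E G z| ≤ Rb V E hVb * ‖x - z‖ := by
  have h1 : distToSet V E G x ≤ Rb V E hVb * ‖z - x‖ + distToSet V E G z :=
    distToSet_triangle_seg hV hGne (segment_Rb_bound hVb x z)
  have h2 : distToSet V E G z ≤ Rb V E hVb * ‖x - z‖ + distToSet V E G x :=
    distToSet_triangle_seg hV hGne (segment_Rb_bound hVb z x)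
  have hnorm : ‖z - x‖ = ‖x - z‖ := norm_sub_rev z x
  rw [abs_le]
  constructor <;> [linarith [h2]; linarith [h1, hnorm ▸ h1]]

lemma gradient_dir_le (hV : Continuous V) (hVb : BddAbove (Set.range V))
    (hGne : G.Nonempty) {x : Euc d} (hd : DifferentiableAt ℝ (distToSet V E G) x)
    (h : Euc d) : -⟪gradient (distToSet V E G) x, h⟫ ≤ Lmet V E x h := by
  set u := distToSet V E G with hudef
  set ξ := gradient u x with hξdef
  -- derivative of s ↦ u (x + s • h) at 0
  have hcurve : HasDerivAt (fun s : ℝ => x + s • h) h 0 := by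
    have h' : HasDerivAt (fun s : ℝ => s • h) ((1:ℝ) • h) 0 := (hasDerivAt_id 0).smul_const h
    rw [one_smul] at h'
    exact h'.const_add x
  have hfd : HasFDerivAt u (InnerProductSpace.toDual ℝ (Euc d) ξ) x :=
    hd.hasGradientAt.hasFDerivAt
  have hfd' : HasFDerivAt u (InnerProductSpace.toDual ℝ (Euc d) ξ) ((fun s : ℝ => x + s • h) 0) := by
    simpa using hfd
  have hg : HasDerivAt (fun s : ℝ => u (x + s • h)) ⟪ξ, h⟫ 0 := by
    have := hfd'.comp_hasDerivAt 0 hcurve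
    simpa [InnerProductSpace.toDual_apply_apply, Function.comp_def] using this
  -- ∀ ε > 0, the bound holds up to ε
  refine le_of_forall_pos_le_add ?_
  intro ε hε
  have hLcont : ContinuousAt (fun p => Lmet V E p h) x := (Lmet_continuous_x hV h).continuousAt
  rw [Metric.continuousAt_iff] at hLcont
  obtain ⟨δ, hδ, hδp⟩ := hLcont ε hε
  set g : ℝ → ℝ := fun s => u (x + s • h) with hgdef
  have key : ∀ s, 0 < s → s < δ / (‖h‖ + 1) → g 0 - g s ≤ s * (Lmet V E x h + ε) := by
    intro s hs hs'
    have hz : ∀ σ ∈ Icc (0:ℝ) 1,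
        Lmet V E (x + σ • ((x + s • h) - x)) ((x + s • h) - x) ≤ s * (Lmet V E x h + ε) := by
      intro σ hσ
      have hzx : (x + s • h) - x = s • h := by abel
      rw [hzx, Lmet_smul hs.le]
      have hdist : dist (x + σ • s • h) x < δ := by
        rw [dist_eq_norm]
        have : x + σ • s • h - x = σ • s • h := by abel
        rw [this, norm_smul, norm_smul]
        have hσ1 : |σ| ≤ 1 := by rw [abs_of_nonneg hσ.1]; exact hσ.2
        have hs1 : ‖s‖ = s := by rw [Real.norm_eq_abs, abs_of_nonneg hs.le]
        have hs'' : s * (‖h‖ + 1) < δ := (lt_div_iff₀ (by positivity)).1 hs'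
        have hh : s * ‖h‖ < δ := by nlinarith [norm_nonneg h]
        calc ‖σ‖ * (‖s‖ * ‖h‖) ≤ 1 * (‖s‖ * ‖h‖) := by
              apply mul_le_mul_of_nonneg_right _ (by positivity)
              rw [Real.norm_eq_abs]; exact hσ1
          _ = s * ‖h‖ := by rw [one_mul, hs1]
          _ < δ := hh
      have := hδp hdist
      rw [Real.dist_eq] at this
      have hlt : Lmet V E (x + σ • s • h) h < Lmet V E x h + ε := by
        have := abs_lt.1 this
        linarith [this.1, this.2]
      have : Lmet V E (x + σ • s • h) h ≤ Lmet V E x h + ε := hlt.le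
      calc s * Lmet V E (x + σ • s • h) h ≤ s * (Lmet V E x h + ε) := by nlinarith
        _ = s * (Lmet V E x h + ε) := rfl
    have htri := distToSet_triangle_seg (E := E) hV hGne hz
    have : g s = u (x + s • h) := rfl
    rw [hgdef]
    simp only
    linarith [htri, (by simp : u (x + (0:ℝ) • h) = u x)]
  -- pass to the limit on slopes
  have hslope : Filter.Tendsto (slope g 0) (nhdsWithin 0 (Ioi 0)) (nhds ⟪ξ, h⟫) := by
    have := hasDerivAt_iff_tendsto_slope.1 hg
    exact this.mono_left (nhdsWithin_mono 0 (fun s hs => ne_of_gt hs))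
  have hbound : ∀ᶠ s in nhdsWithin 0 (Ioi 0), -(Lmet V E x h + ε) ≤ slope g 0 s := by
    have hmem : Ioo (0:ℝ) (δ / (‖h‖ + 1)) ∈ nhdsWithin (0:ℝ) (Ioi 0) :=
      Ioo_mem_nhdsGT_of_mem ⟨le_refl 0, by positivity⟩
    filter_upwards [hmem] with s hs
    have hkey := key s hs.1 hs.2
    rw [slope_def_field, sub_zero, le_div_iff₀ hs.1]
    nlinarith [hkey]
  have hge : -(Lmet V E x h + ε) ≤ ⟪ξ, h⟫ := ge_of_tendsto hslope hbound
  linarith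

lemma gradient_mem_Kx (hV : Continuous V) (hVb : BddAbove (Set.range V))
    (hGne : G.Nonempty) {x : Euc d} (hd : DifferentiableAt ℝ (distToSet V E G) x) :
    gradient (distToSet V E G) x ∈ Kx V E x := by
  set ξ := gradient (distToSet V E G) x with hξdef
  have hdir : ∀ w : Euc d, ⟪ξ, w⟫ ≤ Lmet V E x w := by
    intro w
    have := gradient_dir_le hV hVb hGne hd (-w)
    rw [Lmet_neg, inner_neg_right] at this
    linarith
  by_contra hnot
  obtain ⟨f, u', hfa, hfx⟩ := geometric_hahn_banach_closed_point
    (Kc_convex (c := cV V E x)) (Kc_closed (c := cV V E x)) hnot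
  set w := (InnerProductSpace.toDual ℝ (Euc d)).symm f with hwdef
  have hfw : ∀ a : Euc d, ⟪w, a⟫ = f a := fun a => InnerProductSpace.toDual_symm_apply
  have hLle : Lmet V E x w ≤ u' := by
    rw [Lmet_eq]
    apply Real.sSup_le
    · rintro r ⟨a, ha, rfl⟩
      have : ⟪a, w⟫ = f a := by rw [real_inner_comm]; exact hfw a
      rw [this]
      exact (hfa a ha).le
    · have h0 : f 0 < u' := hfa 0 (zero_mem_Kc (cV_nonneg x))
      rw [map_zero] at h0
      exact h0.le
  have hfin : ⟪ξ, w⟫ ≤ Lmet V E x w := hdir w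
  have hfx' : f ξ = ⟪ξ, w⟫ := by rw [real_inner_comm]; exact (hfw ξ).symm
  rw [hfx'] at hfx
  linarith

end Main

/-- if `V` is continuous and bounded above and `𝒢` is closed, then at every
point where `d_𝒢` is differentiable its gradient lies in `K_x`; in particular this holds
almost everywhere (`d_𝒢` being Lipschitz). -/
theorem gradient_distToSet_mem_Kx (d : ℕ) (V : EuclideanSpace ℝ (Fin d) → ℝ)
    (hV : Continuous V) (hVb : BddAbove (Set.range V)) (E : ℝ)
    (G : Set (EuclideanSpace ℝ (Fin d))) (hG : IsClosed G) :
    (∀ x : EuclideanSpace ℝ (Fin d), DifferentiableAt ℝ (distToSet V E G) x →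
      gradient (distToSet V E G) x ∈ Kx V E x) ∧
    (∀ᵐ x ∂(MeasureTheory.volume : MeasureTheory.Measure (EuclideanSpace ℝ (Fin d))),
      DifferentiableAt ℝ (distToSet V E G) x ∧
        gradient (distToSet V E G) x ∈ Kx V E x) := by
  rcases G.eq_empty_or_nonempty with hGe | hGne
  · -- G empty : distToSet is constant 0
    subst hGe
    have hu : distToSet V E (∅ : Set (Euc d)) = fun _ => (0:ℝ) := by
      funext x
      rw [distToSet_eq]
      have : DSet V E (∅ : Set (Euc d)) x = ∅ := by
        rw [eq_empty_iff_forall_notMem]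
        rintro r ⟨y, hy, -⟩
        exact hy
      rw [this, Real.sInf_empty]
    have hdiff : ∀ x : Euc d, DifferentiableAt ℝ (distToSet V E (∅ : Set (Euc d))) x := by
      intro x; rw [hu]; exact differentiableAt_const 0
    have hgrad : ∀ x : Euc d, gradient (distToSet V E (∅ : Set (Euc d))) x ∈ Kx V E x := by
      intro x
      have : gradient (distToSet V E (∅ : Set (Euc d))) x = 0 := by
        rw [hu]
        unfold gradient
        rw [fderiv_fun_const]
        simp
      rw [this]
      exact zero_mem_Kc (cV_nonneg x)
    exact ⟨fun x _ => hgrad x,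
      Filter.Eventually.of_forall (fun x => ⟨hdiff x, hgrad x⟩)⟩
  · -- G nonempty
    have part1 : ∀ x : Euc d, DifferentiableAt ℝ (distToSet V E G) x →
        gradient (distToSet V E G) x ∈ Kx V E x :=
      fun x hd => gradient_mem_Kx hV hVb hGne hd
    have hlip : LipschitzWith (Real.toNNReal (Rb V E hVb)) (distToSet V E G) := by
      apply LipschitzWith.of_dist_le_mul
      intro x y
      rw [Real.dist_eq, dist_eq_norm, Real.coe_toNNReal _ (Rb_nonneg hVb)]
      exact distToSet_lipschitz hV hVb hGne x y
    have hae : ∀ᵐ x ∂(volume : Measure (Euc d)),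
        DifferentiableAt ℝ (distToSet V E G) x := hlip.ae_differentiableAt
    exact ⟨part1, hae.mono (fun x hx => ⟨hx, part1 x hx⟩)⟩

end
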